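/- Let g be proper, lsc, ρ-weakly convex with γρ < 1. Then the Moreau envelope g^γ is ρ/(1 - γρ)-weakly convex. -/

import Mathlib

open scoped RealInnerProductSpace
open Set

private lemma le_of_forall_pos_le_add' {a b : ℝ} (h : ∀ ε : ℝ, 0 < ε → a ≤ b + ε) :
    a ≤ b := by
  by_contra hc
  push_neg at hc
  have := h ((a - b) / 2) (by linarith)
  linarith

private lemma convexOn_normSq {E : Type*} [NormedAddCommGroup E] [InnerProductSpace ℝ E] :
    ConvexOn ℝ Set.univ (fun u : E => ‖u‖ ^ 2) := by
  refine ⟨convex_univ, fun x _ y _ a b ha hb hab => ?_⟩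
  have h1 : ‖a • x + b • y‖ ^ 2
      = a ^ 2 * ‖x‖ ^ 2 + 2 * (a * b * ⟪x, y⟫) + b ^ 2 * ‖y‖ ^ 2 := by
    rw [norm_add_sq_real, real_inner_smul_left, real_inner_smul_right,
      norm_smul, norm_smul, mul_pow, mul_pow, Real.norm_eq_abs, Real.norm_eq_abs,
      sq_abs, sq_abs]
    ring
  simp only [smul_eq_mul]
  nlinarith [real_inner_le_norm x y, sq_nonneg (‖x‖ - ‖y‖), mul_nonneg ha hb,
    norm_nonneg x, norm_nonneg y]

theorem moreau_envelope_weakly_convex {d : ℕ}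
    (g : EuclideanSpace ℝ (Fin d) → ℝ) (ρ γ : ℝ) (hγ : 0 < γ) (hγρ : γ * ρ < 1)
    (hlsc : LowerSemicontinuous g)
    (hconv : ConvexOn ℝ Set.univ (fun z => g z + ρ / 2 * ‖z‖ ^ 2)) :
    ConvexOn ℝ Set.univ (fun x =>
      (⨅ y, (1 / (2 * γ)) * ‖x - y‖ ^ 2 + g y) + (ρ / (1 - γ * ρ)) / 2 * ‖x‖ ^ 2) := by
  classical
  set α : ℝ := 1 - γ * ρ with hαdef
  have hα : 0 < α := by simp only [hαdef]; linarith
  set c : ℝ := 1 / (2 * γ * α) with hcdef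
  have hc : 0 < c := by positivity
  set h : EuclideanSpace ℝ (Fin d) → ℝ := fun z => g z + ρ / 2 * ‖z‖ ^ 2 with hhdef
  set Φ : EuclideanSpace ℝ (Fin d) × EuclideanSpace ℝ (Fin d) → ℝ :=
    fun p => c * ‖p.1 - α • p.2‖ ^ 2 + h p.2 with hΦdef
  clear_value α c h Φ
  -- key algebraic identity
  have key : ∀ x y : EuclideanSpace ℝ (Fin d),
      (1 / (2 * γ)) * ‖x - y‖ ^ 2 + g y + (ρ / α) / 2 * ‖x‖ ^ 2 = Φ (x, y) := by
    intro x y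
    have e1 : ‖x - y‖ ^ 2 = ‖x‖ ^ 2 - 2 * ⟪x, y⟫ + ‖y‖ ^ 2 := norm_sub_sq_real x y
    have e2 : ‖x - α • y‖ ^ 2 = ‖x‖ ^ 2 - 2 * (α * ⟪x, y⟫) + α ^ 2 * ‖y‖ ^ 2 := by
      rw [norm_sub_sq_real, real_inner_smul_right, norm_smul, mul_pow,
        Real.norm_eq_abs, sq_abs]
    have hγ0 : γ ≠ 0 := ne_of_gt hγ
    have hα0 : (1:ℝ) - γ * ρ ≠ 0 := by linarith
    simp only [hΦdef, hhdef, hcdef, e1, e2]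
    rw [hαdef]
    field_simp
    ring
  -- affine minorant of h
  have hS_closed : IsClosed {p : EuclideanSpace ℝ (Fin d) × ℝ | h p.1 ≤ p.2} := by
    have hcont : Continuous fun z : EuclideanSpace ℝ (Fin d) => ρ / 2 * ‖z‖ ^ 2 := by
      continuity
    have hlsc' : LowerSemicontinuous h := by
      rw [hhdef]; exact hlsc.add hcont.lowerSemicontinuous
    have hF : LowerSemicontinuous
        (fun p : EuclideanSpace ℝ (Fin d) × ℝ => h p.1 + -p.2) :=
      (LowerSemicontinuous.comp hlsc' continuous_fst).add continuous_snd.neg.lowerSemicontinuous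
    have e : {p : EuclideanSpace ℝ (Fin d) × ℝ | h p.1 ≤ p.2}
        = (fun p : EuclideanSpace ℝ (Fin d) × ℝ => h p.1 + -p.2) ⁻¹' Set.Iic 0 := by
      ext p
      simp [Set.mem_setOf_eq, ← sub_eq_add_neg, sub_nonpos]
    rw [e]
    exact hF.isClosed_preimage 0
  have hS_convex : Convex ℝ {p : EuclideanSpace ℝ (Fin d) × ℝ | h p.1 ≤ p.2} := by
    simpa [hhdef] using hconv.convex_epigraph
  have hx0 : ((0 : EuclideanSpace ℝ (Fin d)), h 0 - 1) ∉
      {p : EuclideanSpace ℝ (Fin d) × ℝ | h p.1 ≤ p.2} := by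
    simp only [Set.mem_setOf_eq, not_le]; linarith
  obtain ⟨f, u, hfu, hux⟩ := geometric_hahn_banach_closed_point hS_convex hS_closed hx0
  set β : ℝ := f ((0 : EuclideanSpace ℝ (Fin d)), (1 : ℝ)) with hβdef
  set φ : EuclideanSpace ℝ (Fin d) → ℝ := fun z => f (z, 0) with hφdef
  have hsplit : ∀ (z : EuclideanSpace ℝ (Fin d)) (t : ℝ), f (z, t) = φ z + t * β := by
    intro z t
    have e : (z, t) = (z, (0 : ℝ)) + t • ((0 : EuclideanSpace ℝ (Fin d)), (1 : ℝ)) := by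
      simp [Prod.ext_iff]
    rw [e, map_add, map_smul]
    simp [hβdef, hφdef, smul_eq_mul]
  have hβneg : β < 0 := by
    have h1 : f ((0 : EuclideanSpace ℝ (Fin d)), h 0) < u := hfu _ (by simp)
    have h2 : u < f ((0 : EuclideanSpace ℝ (Fin d)), h 0 - 1) := hux
    rw [hsplit] at h1 h2
    nlinarith
  have hminor : ∀ z : EuclideanSpace ℝ (Fin d), u / β - ‖φ z‖ / (-β) ≤ h z := by
    intro z
    have h1 : φ z + h z * β < u := by
      have := hfu (z, h z) (by simp)
      rwa [hsplit] at this
    have h2 : -(φ z) ≤ ‖φ z‖ := by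
      rw [Real.norm_eq_abs]; exact neg_le_abs _
    have e : u / β - ‖φ z‖ / (-β) = (u + ‖φ z‖) / β := by
      rw [div_neg]; ring
    rw [e, div_le_iff_of_neg hβneg]
    linarith
  have hCb : ∃ C b : ℝ, 0 ≤ C ∧ ∀ z : EuclideanSpace ℝ (Fin d), b - C * ‖z‖ ≤ h z := by
    set L : EuclideanSpace ℝ (Fin d) →L[ℝ] ℝ :=
      f.comp (ContinuousLinearMap.inl ℝ (EuclideanSpace ℝ (Fin d)) ℝ) with hLdef
    have hLφ : ∀ z, L z = φ z := fun z => rfl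
    refine ⟨‖L‖ / (-β), u / β, div_nonneg (norm_nonneg _) (by linarith), fun z => ?_⟩
    refine le_trans ?_ (hminor z)
    have h4 : ‖φ z‖ ≤ ‖L‖ * ‖z‖ := by rw [← hLφ]; exact L.le_opNorm z
    have h5 : ‖φ z‖ / (-β) ≤ ‖L‖ * ‖z‖ / (-β) :=
      div_le_div_of_nonneg_right h4 (by linarith) |>.trans_eq rfl
    have h6 : ‖L‖ / (-β) * ‖z‖ = ‖L‖ * ‖z‖ / (-β) := by ring
    linarith [h5, h6.le]
  obtain ⟨C, b, hC, hCb⟩ := hCb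
  -- lower bound for Φ(x, ·)
  have hlb : ∀ x y : EuclideanSpace ℝ (Fin d),
      b - C / α * ‖x‖ - C ^ 2 / (4 * c * α ^ 2) ≤ Φ (x, y) := by
    intro x y
    have h1 : b - C * ‖y‖ ≤ h y := hCb y
    have h2 : α * ‖y‖ ≤ ‖x‖ + ‖x - α • y‖ := by
      have e : α • y = x - (x - α • y) := by abel
      calc α * ‖y‖ = ‖α • y‖ := by
            rw [norm_smul, Real.norm_eq_abs, abs_of_pos hα]
        _ = ‖x - (x - α • y)‖ := by rw [← e]
        _ ≤ ‖x‖ + ‖x - α • y‖ := norm_sub_le _ _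
    have hq : (0:ℝ) ≤ c * (‖x - α • y‖ - C / (2 * c * α)) ^ 2 := by positivity
    have hqe : c * (‖x - α • y‖ - C / (2 * c * α)) ^ 2
        = c * ‖x - α • y‖ ^ 2 - C / α * ‖x - α • y‖ + C ^ 2 / (4 * c * α ^ 2) := by
      field_simp
      ring
    have h3 : C * ‖y‖ ≤ C / α * ‖x‖ + C / α * ‖x - α • y‖ := by
      have h3a : C * (α * ‖y‖) ≤ C * (‖x‖ + ‖x - α • y‖) :=
        mul_le_mul_of_nonneg_left h2 hC
      have h3b : C / α * ‖x‖ + C / α * ‖x - α • y‖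
          = C * (‖x‖ + ‖x - α • y‖) / α := by ring
      rw [h3b, le_div_iff₀ hα]
      calc C * ‖y‖ * α = C * (α * ‖y‖) := by ring
        _ ≤ C * (‖x‖ + ‖x - α • y‖) := h3a
    simp only [hΦdef]
    have h4 : c * ‖x - α • y‖ ^ 2 - C / α * ‖x - α • y‖ + C ^ 2 / (4 * c * α ^ 2) ≥ 0 := by
      rw [← hqe]; exact hq
    set T := ‖x - α • y‖
    linarith [h1, h3, h4]
  have hbdd : ∀ x : EuclideanSpace ℝ (Fin d),
      BddBelow (Set.range fun y => Φ (x, y)) := by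
    intro x
    refine ⟨b - C / α * ‖x‖ - C ^ 2 / (4 * c * α ^ 2), ?_⟩
    rintro r ⟨y, rfl⟩
    exact hlb x y
  -- rewrite the target function
  have Teq : ∀ x : EuclideanSpace ℝ (Fin d),
      (⨅ y, (1 / (2 * γ)) * ‖x - y‖ ^ 2 + g y) + (ρ / α) / 2 * ‖x‖ ^ 2
        = ⨅ y, Φ (x, y) := by
    intro x
    have hbdd' : BddBelow (Set.range fun y => (1 / (2 * γ)) * ‖x - y‖ ^ 2 + g y) := by
      obtain ⟨m, hm⟩ := hbdd x
      refine ⟨m - (ρ / α) / 2 * ‖x‖ ^ 2, ?_⟩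
      rintro r ⟨y, rfl⟩
      have h1 : m ≤ Φ (x, y) := hm ⟨y, rfl⟩
      rw [← key x y] at h1
      linarith
    rw [ciInf_add hbdd']
    exact iInf_congr fun y => key x y
  -- joint convexity of Φ
  have hΦconv : ConvexOn ℝ Set.univ Φ := by
    have hL : ConvexOn ℝ Set.univ
        (fun p : EuclideanSpace ℝ (Fin d) × EuclideanSpace ℝ (Fin d) =>
          c * ‖p.1 - α • p.2‖ ^ 2) := by
      set L : (EuclideanSpace ℝ (Fin d) × EuclideanSpace ℝ (Fin d)) →ₗ[ℝ]
          EuclideanSpace ℝ (Fin d) :=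
        LinearMap.fst ℝ _ _ - α • LinearMap.snd ℝ _ _ with hLd
      have h1 := (convexOn_normSq (E := EuclideanSpace ℝ (Fin d))).smul (le_of_lt hc)
      have h2 := h1.comp_affineMap L.toAffineMap
      simp only [Set.preimage_univ] at h2
      convert h2 using 2 with p
      all_goals rfl
    have hH : ConvexOn ℝ Set.univ
        (fun p : EuclideanSpace ℝ (Fin d) × EuclideanSpace ℝ (Fin d) => h p.2) := by
      have h2 := hconv.comp_affineMap
        (LinearMap.snd ℝ (EuclideanSpace ℝ (Fin d)) (EuclideanSpace ℝ (Fin d))).toAffineMap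
      simp only [Set.preimage_univ] at h2
      exact h2
    have h5 := hL.add hH
    rw [hΦdef]
    simpa [Pi.add_def] using h5
  -- conclude
  refine ⟨convex_univ, fun x₁ _ x₂ _ θ τ hθ hτ hθτ => ?_⟩
  simp only [smul_eq_mul]
  rw [Teq, Teq, Teq]
  refine le_of_forall_pos_le_add' fun ε hε => ?_
  have hx₁ : (⨅ y, Φ (x₁, y)) < (⨅ y, Φ (x₁, y)) + ε := by linarith
  have hx₂ : (⨅ y, Φ (x₂, y)) < (⨅ y, Φ (x₂, y)) + ε := by linarith
  obtain ⟨y₁, hy₁⟩ := exists_lt_of_ciInf_lt hx₁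
  obtain ⟨y₂, hy₂⟩ := exists_lt_of_ciInf_lt hx₂
  have step1 : (⨅ y, Φ (θ • x₁ + τ • x₂, y)) ≤ Φ (θ • x₁ + τ • x₂, θ • y₁ + τ • y₂) :=
    ciInf_le (hbdd _) _
  have step2 : Φ (θ • x₁ + τ • x₂, θ • y₁ + τ • y₂) ≤ θ * Φ (x₁, y₁) + τ * Φ (x₂, y₂) := by
    have h2 := hΦconv.2 (Set.mem_univ (x₁, y₁)) (Set.mem_univ (x₂, y₂)) hθ hτ hθτ
    simpa [Prod.smul_mk, Prod.mk_add_mk, smul_eq_mul] using h2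
  have s1 : θ * Φ (x₁, y₁) ≤ θ * ((⨅ y, Φ (x₁, y)) + ε) :=
    mul_le_mul_of_nonneg_left hy₁.le hθ
  have s2 : τ * Φ (x₂, y₂) ≤ τ * ((⨅ y, Φ (x₂, y)) + ε) :=
    mul_le_mul_of_nonneg_left hy₂.le hτ
  have e : θ * ((⨅ y, Φ (x₁, y)) + ε) + τ * ((⨅ y, Φ (x₂, y)) + ε)
      = θ * (⨅ y, Φ (x₁, y)) + τ * (⨅ y, Φ (x₂, y)) + (θ + τ) * ε := by ring
  rw [hθτ, one_mul] at e
  linarith
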